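/- Let θ ∈ (0,1) and λ ∈ (0,1]. The map Ψ satisfies Ψ(0) = 0 and is a global contraction: |Ψ(g) − Ψ(h)| ≤ ρ·|g − h| for all g, h ∈ ℝ, where ρ = 1 − λ·min(θ, 1−θ) ∈ (0,1). In particular |Ψ(g)| ≤ ρ·|g| for all g ∈ ℝ. -/

import Mathlib

open Real

/-- One-block pre-arbitrage gap update map of the partially active AMM built on
a G3M with weights `(θ, 1-θ)`. -/
noncomputable def Psi (θ lam g : ℝ) : ℝ :=
  g - Real.log (1 - lam + lam * Real.exp (θ * g))
    + Real.log (1 - lam + lam * Real.exp (-(1 - θ) * g))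

noncomputable def PsiD (θ lam g : ℝ) : ℝ :=
  1 - θ * (lam * Real.exp (θ * g) / (1 - lam + lam * Real.exp (θ * g)))
    - (1 - θ) * (lam * Real.exp (-(1 - θ) * g) / (1 - lam + lam * Real.exp (-(1 - θ) * g)))

lemma denom_pos {lam : ℝ} (hlam : lam ∈ Set.Ioc (0:ℝ) 1) (t : ℝ) :
    0 < 1 - lam + lam * Real.exp t := by
  have h1 : 0 ≤ 1 - lam := by linarith [hlam.2]
  have h2 : 0 < lam * Real.exp t := mul_pos hlam.1 (Real.exp_pos t)
  linarith

lemma psi_hasDerivAt (θ lam : ℝ) (hlam : lam ∈ Set.Ioc (0:ℝ) 1) (g : ℝ) :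
    HasDerivAt (Psi θ lam) (PsiD θ lam g) g := by
  have hA : (1 : ℝ) - lam + lam * Real.exp (θ * g) ≠ 0 := (denom_pos hlam _).ne'
  have hB : (1 : ℝ) - lam + lam * Real.exp (-(1 - θ) * g) ≠ 0 := (denom_pos hlam _).ne'
  have h1 : HasDerivAt (fun x : ℝ => 1 - lam + lam * Real.exp (θ * x))
      (lam * (Real.exp (θ * g) * θ)) g := by
    have := (((hasDerivAt_id g).const_mul θ).exp).const_mul lam
    simpa using this.const_add (1 - lam)
  have h2 : HasDerivAt (fun x : ℝ => 1 - lam + lam * Real.exp (-(1 - θ) * x))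
      (lam * (Real.exp (-(1 - θ) * g) * (-(1 - θ)))) g := by
    have := (((hasDerivAt_id g).const_mul (-(1 - θ))).exp).const_mul lam
    simpa using this.const_add (1 - lam)
  have hmain := ((hasDerivAt_id g).sub (h1.log hA)).add (h2.log hB)
  have heq : Psi θ lam = fun x : ℝ => x - Real.log (1 - lam + lam * Real.exp (θ * x))
      + Real.log (1 - lam + lam * Real.exp (-(1 - θ) * x)) := rfl
  rw [heq]
  refine hmain.congr_deriv ?_
  unfold PsiD
  field_simp
  ring

lemma frac_nonneg {lam : ℝ} (hlam : lam ∈ Set.Ioc (0:ℝ) 1) (t : ℝ) :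
    0 ≤ lam * Real.exp t / (1 - lam + lam * Real.exp t) :=
  div_nonneg (le_of_lt (mul_pos hlam.1 (Real.exp_pos t))) (denom_pos hlam t).le

lemma frac_le_one {lam : ℝ} (hlam : lam ∈ Set.Ioc (0:ℝ) 1) (t : ℝ) :
    lam * Real.exp t / (1 - lam + lam * Real.exp t) ≤ 1 := by
  rw [div_le_one (denom_pos hlam t)]
  linarith [hlam.2]

lemma frac_ge_lam {lam : ℝ} (hlam : lam ∈ Set.Ioc (0:ℝ) 1) {t : ℝ} (ht : 0 ≤ t) :
    lam ≤ lam * Real.exp t / (1 - lam + lam * Real.exp t) := by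
  rw [le_div_iff₀ (denom_pos hlam t)]
  have he : (1 : ℝ) ≤ Real.exp t := Real.one_le_exp ht
  nlinarith [mul_nonneg (sub_nonneg.2 hlam.2) (sub_nonneg.2 he), hlam.1, mul_pos hlam.1 (Real.exp_pos t)]

lemma psiD_bound (θ lam : ℝ) (hθ : θ ∈ Set.Ioo (0:ℝ) 1) (hlam : lam ∈ Set.Ioc (0:ℝ) 1)
    (g : ℝ) : |PsiD θ lam g| ≤ 1 - lam * min θ (1 - θ) := by
  set s := lam * Real.exp (θ * g) / (1 - lam + lam * Real.exp (θ * g)) with hs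
  set r := lam * Real.exp (-(1 - θ) * g) / (1 - lam + lam * Real.exp (-(1 - θ) * g)) with hr
  have hs0 : 0 ≤ s := frac_nonneg hlam _
  have hr0 : 0 ≤ r := frac_nonneg hlam _
  have hs1 : s ≤ 1 := frac_le_one hlam _
  have hr1 : r ≤ 1 := frac_le_one hlam _
  have hθ0 := hθ.1
  have hθ1 := hθ.2
  have hlow : 0 ≤ PsiD θ lam g := by
    unfold PsiD
    rw [← hs, ← hr]
    nlinarith
  have hupper : PsiD θ lam g ≤ 1 - lam * min θ (1 - θ) := by
    have hmin1 : lam * min θ (1 - θ) ≤ lam * θ :=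
      mul_le_mul_of_nonneg_left (min_le_left _ _) hlam.1.le
    have hmin2 : lam * min θ (1 - θ) ≤ lam * (1 - θ) :=
      mul_le_mul_of_nonneg_left (min_le_right _ _) hlam.1.le
    rcases le_total 0 g with hg | hg
    · have : lam ≤ s := frac_ge_lam hlam (by positivity)
      unfold PsiD
      rw [← hs, ← hr]
      nlinarith
    · have : lam ≤ r := frac_ge_lam hlam (by nlinarith)
      unfold PsiD
      rw [← hs, ← hr]
      nlinarith
  rw [abs_le]
  constructor
  · have : 0 < lam * min θ (1 - θ) := mul_pos hlam.1 (lt_min hθ0 (by linarith))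
    linarith
  · exact hupper

theorem stmt2 (θ lam : ℝ) (hθ : θ ∈ Set.Ioo (0:ℝ) 1) (hlam : lam ∈ Set.Ioc (0:ℝ) 1) :
    Psi θ lam 0 = 0 ∧
    (∀ g h : ℝ, |Psi θ lam g - Psi θ lam h| ≤ (1 - lam * min θ (1 - θ)) * |g - h|) ∧
    1 - lam * min θ (1 - θ) ∈ Set.Ioo (0:ℝ) 1 ∧
    (∀ g : ℝ, |Psi θ lam g| ≤ (1 - lam * min θ (1 - θ)) * |g|) := by
  have hzero : Psi θ lam 0 = 0 := by
    simp [Psi]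
  have hlip : ∀ g h : ℝ, |Psi θ lam g - Psi θ lam h| ≤ (1 - lam * min θ (1 - θ)) * |g - h| := by
    intro g h
    have := Convex.norm_image_sub_le_of_norm_hasDerivWithin_le
      (f := Psi θ lam) (f' := PsiD θ lam) (s := Set.univ) (C := 1 - lam * min θ (1 - θ))
      (fun x _ => (psi_hasDerivAt θ lam hlam x).hasDerivWithinAt)
      (fun x _ => by simpa [Real.norm_eq_abs] using psiD_bound θ lam hθ hlam x)
      convex_univ (Set.mem_univ h) (Set.mem_univ g)
    simpa [Real.norm_eq_abs] using this
  have hmem : 1 - lam * min θ (1 - θ) ∈ Set.Ioo (0:ℝ) 1 := by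
    constructor
    · have h1 : min θ (1 - θ) ≤ θ := min_le_left _ _
      nlinarith [hlam.1, hlam.2, hθ.1, hθ.2]
    · have : 0 < lam * min θ (1 - θ) := mul_pos hlam.1 (lt_min hθ.1 (by linarith [hθ.2]))
      linarith
  refine ⟨hzero, hlip, hmem, fun g => ?_⟩
  simpa [hzero] using hlip g 0
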